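/- Let B ⊆ ℕ be a dynamical C*-set. Then there exists a dynamical C*-set C ⊆ B such that for every m ∈ C, the shift −m + C = {n ∈ ℕ : m + n ∈ C} is a dynamical C*-set. -/

import Mathlib

open MeasureTheory Filter

/-- Weak mixing for a measure-preserving system. -/
def WeakMixing {X : Type*} [MeasurableSpace X] (μ : Measure X) (T : X → X) : Prop :=
  ∀ A B : Set X, MeasurableSet A → MeasurableSet B →
    Tendsto (fun N : ℕ => (1 / N : ℝ) * ∑ n ∈ Finset.Icc 1 N,
      |(μ (A ∩ T^[n] ⁻¹' B)).toReal - (μ A).toReal * (μ B).toReal|)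
      atTop (nhds 0)

/-- `A ⊆ ℕ` is a dynamical C*-set: the positive return-time set of two sets of
positive measure in some weakly mixing probability system is contained in `A`. -/
def DynCStar (A : Set ℕ) : Prop :=
  ∃ (X : Type) (_ : MeasurableSpace X) (μ : Measure X) (T : X → X),
    IsProbabilityMeasure μ ∧ MeasurePreserving T μ μ ∧ WeakMixing μ T ∧
    ∃ A₀ A₁ : Set X, MeasurableSet A₀ ∧ MeasurableSet A₁ ∧ 0 < μ A₀ * μ A₁ ∧
      {n : ℕ | 0 < μ (A₀ ∩ T^[n] ⁻¹' A₁)} ⊆ A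

/-- Every dynamical C*-set `B` contains a dynamical C*-set `C` all of whose
shifts `−m + C` (for `m ∈ C`) are dynamical C*-sets. -/
theorem dynCStar_shift (B : Set ℕ) (hB : DynCStar B) :
    ∃ C : Set ℕ, C ⊆ B ∧ DynCStar C ∧
      ∀ m ∈ C, DynCStar {n : ℕ | m + n ∈ C} := by
  obtain ⟨X, mX, μ, T, hprob, hmp, hwm, A₀, A₁, hm₀, hm₁, hpos, hsub⟩ := hB
  refine ⟨{n : ℕ | 0 < μ (A₀ ∩ T^[n] ⁻¹' A₁)}, hsub,
    ⟨X, mX, μ, T, hprob, hmp, hwm, A₀, A₁, hm₀, hm₁, hpos, subset_rfl⟩, ?_⟩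
  intro m hm
  set D : Set X := A₀ ∩ T^[m] ⁻¹' A₁ with hD
  have hmD : MeasurableSet D := hm₀.inter ((hmp.iterate m).measurable hm₁)
  refine ⟨X, mX, μ, T, hprob, hmp, hwm, D, D, hmD, hmD, ?_, ?_⟩
  · exact ENNReal.mul_pos hm.ne' hm.ne'
  · intro n hn
    have hsub2 : D ∩ T^[n] ⁻¹' D ⊆ A₀ ∩ T^[m + n] ⁻¹' A₁ := by
      intro x hx
      refine ⟨hx.1.1, ?_⟩
      have : T^[m] (T^[n] x) ∈ A₁ := hx.2.2
      simpa [Function.iterate_add_apply] using this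
    exact lt_of_lt_of_le hn (measure_mono hsub2)
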